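/- arXiv:1006.5522 — 3 statements merged into one kernel-verified Lean document; each statement's English description precedes it below -/
import Mathlib

section
/- Let f ∈ L^p_loc(ℝ) with 1 ≤ p < ∞ and define g(τ) = τ^{-p} ∫_{-1/2}^{1/2 - τ} |f(t+τ) - f(t)|^p dt for τ ∈ (0,1). Then g(2σ) ≤ g(σ) for all 0 < σ < 1/2. -/
open MeasureTheory Set

-- real version of the convexity inequality
lemma aux_rpow_add (p : ℝ) (hp : 1 ≤ p) (a b : ℝ) :
    |a + b| ^ p ≤ 2 ^ (p - 1) * (|a| ^ p + |b| ^ p) := by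
  have h1 : |a + b| ^ p ≤ (|a| + |b|) ^ p :=
    Real.rpow_le_rpow (abs_nonneg _) (abs_add_le a b) (by linarith)
  refine h1.trans ?_
  have := NNReal.rpow_add_le_mul_rpow_add_rpow (Real.toNNReal |a|) (Real.toNNReal |b|) hp
  have h2 := NNReal.coe_le_coe.2 this
  push_cast at h2
  rw [Real.coe_toNNReal _ (abs_nonneg a), Real.coe_toNNReal _ (abs_nonneg b)] at h2
  convert h2 using 3 <;> simp [NNReal.coe_rpow, Real.coe_toNNReal, abs_nonneg]

lemma aux_shift (G : ℝ → ℝ) (hG : ∀ a b : ℝ, IntegrableOn G (Icc a b))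
    (c a b : ℝ) : IntegrableOn (fun t => G (t + c)) (Icc a b) := by
  have h1 : IntervalIntegrable G volume (a + c) (b + c) := by
    rw [intervalIntegrable_iff']
    exact hG _ _
  have h2 := h1.comp_add_right c
  rw [add_sub_cancel_right, add_sub_cancel_right, intervalIntegrable_iff'] at h2
  exact h2.mono_set Icc_subset_uIcc

theorem stmt0 (p : ℝ) (hp : 1 ≤ p) (f : ℝ → ℝ) (hfm : Measurable f)
    (hf : ∀ K : Set ℝ, IsCompact K → IntegrableOn (fun t => |f t| ^ p) K)
    (g : ℝ → ℝ)
    (hg : ∀ τ : ℝ, g τ =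
      τ ^ (-p) * ∫ t in Icc (-(1:ℝ)/2) (1/2 - τ), |f (t + τ) - f t| ^ p)
    (σ : ℝ) (hσ0 : 0 < σ) (hσ : σ < 1/2) :
    g (2 * σ) ≤ g σ := by
  set F : ℝ → ℝ → ℝ := fun τ t => |f (t + τ) - f t| ^ p with hF
  have hFnn : ∀ τ t, 0 ≤ F τ t := fun τ t => Real.rpow_nonneg (abs_nonneg _) _
  have hFm : ∀ τ, Measurable (F τ) := fun τ =>
    (Real.continuous_rpow_const (by linarith : (0:ℝ) ≤ p)).measurable.comp
      (((hfm.comp (measurable_add_const τ)).sub hfm).abs)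
  -- integrability of |f (· + c)|^p on compact intervals
  have habs : ∀ a b : ℝ, IntegrableOn (fun t => |f t| ^ p) (Icc a b) :=
    fun a b => hf _ isCompact_Icc
  have habs' : ∀ c a b : ℝ, IntegrableOn (fun t => |f (t + c)| ^ p) (Icc a b) :=
    fun c a b => aux_shift _ habs c a b
  -- integrability of F τ on compact intervals
  have hInt : ∀ τ a b : ℝ, IntegrableOn (F τ) (Icc a b) := by
    intro τ a b
    refine Integrable.mono' (((habs' τ a b).add (habs a b)).const_mul (2 ^ (p - 1)))
      ((hFm τ).aestronglyMeasurable) ?_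
    filter_upwards with t
    rw [Real.norm_eq_abs, abs_of_nonneg (hFnn τ t)]
    have := aux_rpow_add p hp (f (t + τ)) (-f t)
    simpa [sub_eq_add_neg, hF] using this
  have hIntShift : ∀ τ c a b : ℝ, IntegrableOn (fun t => F τ (t + c)) (Icc a b) :=
    fun τ c a b => aux_shift _ (hInt τ) c a b
  -- abbreviations
  set I : ℝ → ℝ := fun τ => ∫ t in Icc (-(1:ℝ)/2) (1/2 - τ), F τ t with hI
  have hle1 : (-(1:ℝ)/2) ≤ 1/2 - 2*σ := by linarith
  have hle2 : (-(1:ℝ)/2 + σ) ≤ 1/2 - σ := by linarith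
  -- Step 1: pointwise bound then integrate
  have step1 : I (2*σ) ≤ 2 ^ (p-1) * ((∫ t in Icc (-(1:ℝ)/2) (1/2 - 2*σ), F σ (t + σ)) +
      ∫ t in Icc (-(1:ℝ)/2) (1/2 - 2*σ), F σ t) := by
    rw [← integral_add (hIntShift σ σ _ _) ((hInt σ _ _)), ← integral_const_mul]
    refine setIntegral_mono_on (hInt _ _ _)
      ((((hIntShift σ σ _ _).add (hInt σ _ _)).const_mul _)) measurableSet_Icc ?_
    intro t _
    have key : f (t + 2*σ) - f t = (f (t + σ + σ) - f (t + σ)) + (f (t + σ) - f t) := by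
      ring_nf
    simp only [hF]
    rw [key]
    exact aux_rpow_add p hp _ _
  -- Step 2: shift the first integral
  have step2 : (∫ t in Icc (-(1:ℝ)/2) (1/2 - 2*σ), F σ (t + σ)) =
      ∫ t in Icc (-(1:ℝ)/2 + σ) (1/2 - σ), F σ t := by
    rw [integral_Icc_eq_integral_Ioc, integral_Icc_eq_integral_Ioc,
      ← intervalIntegral.integral_of_le hle1, ← intervalIntegral.integral_of_le hle2,
      intervalIntegral.integral_comp_add_right]
    congr 1 <;> ring
  -- Step 3 & 4: monotonicity in the domain
  have step3 : (∫ t in Icc (-(1:ℝ)/2 + σ) (1/2 - σ), F σ t) ≤ I σ := by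
    refine setIntegral_mono_set (hInt σ _ _) ?_ ?_
    · filter_upwards with t using hFnn σ t
    · exact HasSubset.Subset.eventuallyLE (Icc_subset_Icc (by linarith) le_rfl)
  have step4 : (∫ t in Icc (-(1:ℝ)/2) (1/2 - 2*σ), F σ t) ≤ I σ := by
    refine setIntegral_mono_set (hInt σ _ _) ?_ ?_
    · filter_upwards with t using hFnn σ t
    · exact HasSubset.Subset.eventuallyLE (Icc_subset_Icc le_rfl (by linarith))
  have h2p : (0:ℝ) < 2 ^ (p-1) := Real.rpow_pos_of_pos (by norm_num) _
  have key : I (2*σ) ≤ 2 ^ p * I σ := by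
    calc I (2*σ) ≤ 2 ^ (p-1) * ((∫ t in Icc (-(1:ℝ)/2) (1/2 - 2*σ), F σ (t + σ)) +
        ∫ t in Icc (-(1:ℝ)/2) (1/2 - 2*σ), F σ t) := step1
      _ ≤ 2 ^ (p-1) * (I σ + I σ) := by
          apply mul_le_mul_of_nonneg_left _ h2p.le
          rw [step2]; exact add_le_add step3 step4
      _ = 2 ^ p * I σ := by
          have h : (2:ℝ) ^ p = 2 ^ (p-1) * 2 := by
            rw [← Real.rpow_add_one (by norm_num : (2:ℝ) ≠ 0) (p-1), sub_add_cancel]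
          rw [h]; ring
  -- finish
  rw [hg, hg]
  have hIσnn : 0 ≤ I σ := setIntegral_nonneg measurableSet_Icc (fun t _ => hFnn σ t)
  have h2σ : ((2*σ) : ℝ) ^ (-p) = 2 ^ (-p) * σ ^ (-p) :=
    Real.mul_rpow (by norm_num) hσ0.le
  have hfin : (2*σ) ^ (-p) * (2 ^ p * I σ) = σ ^ (-p) * I σ := by
    rw [h2σ, Real.rpow_neg (by norm_num : (0:ℝ) ≤ 2)]
    field_simp
  calc (2*σ) ^ (-p) * I (2*σ) ≤ (2*σ) ^ (-p) * (2 ^ p * I σ) :=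
        mul_le_mul_of_nonneg_left key (Real.rpow_nonneg (by linarith) _)
    _ = σ ^ (-p) * I σ := hfin
end

section
/- Let f ∈ L^p_loc(ℝ), 1 ≤ p < ∞, and let g(τ) = τ^{-p} ∫_{-1/2}^{1/2-τ} |f(t+τ)-f(t)|^p dt. If φ : (0,1) → [0,∞) is nonincreasing, then ∫_0^1 g(τ) φ(τ) dτ ≥ (1/2) (∫_0^1 g(τ) dτ)(∫_0^1 φ(τ) dτ). -/
open MeasureTheory Set

private lemma two_rpow_aux {x y p : ℝ} (hx : 0 ≤ x) (hy : 0 ≤ y) (hp : 1 ≤ p) :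
    (x + y) ^ p ≤ 2 ^ (p - 1) * (x ^ p + y ^ p) := by
  have h := NNReal.rpow_add_le_mul_rpow_add_rpow x.toNNReal y.toNNReal hp
  have h2 := (NNReal.coe_le_coe).2 h
  push_cast at h2
  rw [Real.coe_toNNReal x hx, Real.coe_toNNReal y hy] at h2
  exact h2

private lemma abs_sub_rpow {p : ℝ} (hp : 1 ≤ p) (a b c : ℝ) :
    |a - b| ^ p ≤ 2 ^ (p - 1) * (|a - c| ^ p + |c - b| ^ p) := by
  have h1 : |a - b| ≤ |a - c| + |c - b| := abs_sub_le a c b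
  have h2 : |a - b| ^ p ≤ (|a - c| + |c - b|) ^ p :=
    Real.rpow_le_rpow (abs_nonneg _) h1 (le_trans zero_le_one hp)
  exact h2.trans (two_rpow_aux (abs_nonneg _) (abs_nonneg _) hp)

private lemma transl_int {p : ℝ} (f : ℝ → ℝ)
    (hf : ∀ K : Set ℝ, IsCompact K → IntegrableOn (fun t => |f t| ^ p) K)
    (σ a b : ℝ) : IntegrableOn (fun t => |f (t + σ)| ^ p) (Icc a b) := by
  have h := (measurePreserving_add_right (volume : Measure ℝ) σ).integrableOn_comp_preimage
      (MeasurableEquiv.addRight σ).measurableEmbedding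
      (f := fun t => |f t| ^ p) (s := Icc (a + σ) (b + σ))
  have hpre : ((· + σ) : ℝ → ℝ) ⁻¹' Icc (a + σ) (b + σ) = Icc a b := by
    simpa using Set.preimage_add_const_Icc σ (a + σ) (b + σ)
  rw [hpre] at h
  exact h.2 (hf _ isCompact_Icc)

private lemma L1 {p : ℝ} (hp : 1 ≤ p) (f : ℝ → ℝ) (hfm : Measurable f)
    (hf : ∀ K : Set ℝ, IsCompact K → IntegrableOn (fun t => |f t| ^ p) K)
    (σ₁ σ₂ a b : ℝ) :
    IntegrableOn (fun t => |f (t + σ₁) - f (t + σ₂)| ^ p) (Icc a b) := by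
  have hmeas : Measurable fun t : ℝ => |f (t + σ₁) - f (t + σ₂)| ^ p :=
    (((hfm.comp (measurable_add_const σ₁)).sub (hfm.comp (measurable_add_const σ₂))).abs).pow_const p
  have h1 := transl_int f hf σ₁ a b
  have h2 := transl_int f hf σ₂ a b
  refine Integrable.mono' (((h1.add h2)).const_mul ((2:ℝ) ^ (p-1))) hmeas.aestronglyMeasurable ?_
  filter_upwards with t
  rw [Real.norm_eq_abs, abs_of_nonneg (Real.rpow_nonneg (abs_nonneg _) p)]
  have h3 : |f (t + σ₁) - f (t + σ₂)| ^ p ≤ 2 ^ (p - 1) * (|f (t + σ₁) - 0| ^ p + |0 - f (t + σ₂)| ^ p) :=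
    abs_sub_rpow hp _ _ 0
  simpa using h3

private lemma L1' {p : ℝ} (hp : 1 ≤ p) (f : ℝ → ℝ) (hfm : Measurable f)
    (hf : ∀ K : Set ℝ, IsCompact K → IntegrableOn (fun t => |f t| ^ p) K)
    (σ a b : ℝ) :
    IntegrableOn (fun t => |f (t + σ) - f t| ^ p) (Icc a b) := by
  simpa using L1 hp f hfm hf σ 0 a b

private lemma doubling {p : ℝ} (hp : 1 ≤ p) (f : ℝ → ℝ) (hfm : Measurable f)
    (hf : ∀ K : Set ℝ, IsCompact K → IntegrableOn (fun t => |f t| ^ p) K)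
    (g : ℝ → ℝ)
    (hg : ∀ τ : ℝ, g τ =
      τ ^ (-p) * ∫ t in Icc (-(1:ℝ)/2) (1/2 - τ), |f (t + τ) - f t| ^ p)
    {τ : ℝ} (hτ : τ ∈ Ioo (0:ℝ) 1) : g τ ≤ g (τ / 2) := by
  obtain ⟨hτ0, hτ1⟩ := hτ
  set σ := τ / 2 with hσdef
  have hσ0 : 0 < σ := by positivity
  set A : ℝ := -(1:ℝ)/2 with hA
  have hAB : A ≤ 1/2 - τ := by rw [hA]; linarith
  have hABσ : A ≤ 1/2 - σ := by rw [hA]; linarith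
  -- pointwise bound
  have hpt : ∀ t ∈ Icc A (1/2 - τ), |f (t + τ) - f t| ^ p
      ≤ 2 ^ (p-1) * (|f (t + τ) - f (t + σ)| ^ p + |f (t + σ) - f t| ^ p) :=
    fun t _ => abs_sub_rpow hp _ _ _
  have hint1 : IntegrableOn (fun t => |f (t + τ) - f t| ^ p) (Icc A (1/2 - τ)) :=
    L1' hp f hfm hf τ A _
  have hintJ1 : IntegrableOn (fun t => |f (t + τ) - f (t + σ)| ^ p) (Icc A (1/2 - τ)) :=
    L1 hp f hfm hf τ σ A _
  have hintJ2 : IntegrableOn (fun t => |f (t + σ) - f t| ^ p) (Icc A (1/2 - τ)) :=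
    L1' hp f hfm hf σ A _
  have hstep1 : ∫ t in Icc A (1/2 - τ), |f (t + τ) - f t| ^ p
      ≤ ∫ t in Icc A (1/2 - τ),
          2 ^ (p-1) * (|f (t + τ) - f (t + σ)| ^ p + |f (t + σ) - f t| ^ p) :=
    setIntegral_mono_on hint1 ((hintJ1.add hintJ2).const_mul _) measurableSet_Icc hpt
  have hsplit : ∫ t in Icc A (1/2 - τ),
        2 ^ (p-1) * (|f (t + τ) - f (t + σ)| ^ p + |f (t + σ) - f t| ^ p)
      = 2 ^ (p-1) * ((∫ t in Icc A (1/2 - τ), |f (t + τ) - f (t + σ)| ^ p)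
          + ∫ t in Icc A (1/2 - τ), |f (t + σ) - f t| ^ p) := by
    rw [MeasureTheory.integral_const_mul, MeasureTheory.integral_add hintJ1 hintJ2]
  -- translate J1
  have htrans : ∫ t in Icc A (1/2 - τ), |f (t + τ) - f (t + σ)| ^ p
      = ∫ s in Icc (A + σ) (1/2 - σ), |f (s + σ) - f s| ^ p := by
    have hfun : ∀ t : ℝ, |f (t + τ) - f (t + σ)| ^ p
        = (fun s => |f (s + σ) - f s| ^ p) (t + σ) := by
      intro t
      have : t + τ = t + σ + σ := by rw [hσdef]; ring
      simp only [this]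
    simp_rw [hfun]
    rw [MeasureTheory.integral_Icc_eq_integral_Ioc, MeasureTheory.integral_Icc_eq_integral_Ioc,
      ← intervalIntegral.integral_of_le hAB, ← intervalIntegral.integral_of_le (by linarith : A + σ ≤ 1/2 - σ)]
    rw [intervalIntegral.integral_comp_add_right (fun s => |f (s + σ) - f s| ^ p) σ]
    congr 1
    rw [hσdef]; ring
  have hmono1 : ∫ s in Icc (A + σ) (1/2 - σ), |f (s + σ) - f s| ^ p
      ≤ ∫ s in Icc A (1/2 - σ), |f (s + σ) - f s| ^ p := by
    refine setIntegral_mono_set (L1' hp f hfm hf σ A _) ?_ ?_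
    · filter_upwards with s using Real.rpow_nonneg (abs_nonneg _) p
    · exact HasSubset.Subset.eventuallyLE (Icc_subset_Icc (by linarith) le_rfl)
  have hmono2 : ∫ t in Icc A (1/2 - τ), |f (t + σ) - f t| ^ p
      ≤ ∫ t in Icc A (1/2 - σ), |f (t + σ) - f t| ^ p := by
    refine setIntegral_mono_set (L1' hp f hfm hf σ A _) ?_ ?_
    · filter_upwards with s using Real.rpow_nonneg (abs_nonneg _) p
    · exact HasSubset.Subset.eventuallyLE (Icc_subset_Icc le_rfl (by linarith))
  set Iσ : ℝ := ∫ s in Icc A (1/2 - σ), |f (s + σ) - f s| ^ p with hIσ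
  have h2p : (2:ℝ) ^ (p-1) * 2 = 2 ^ p := by
    rw [Real.rpow_sub two_pos, Real.rpow_one]; field_simp
  have hItot : ∫ t in Icc A (1/2 - τ), |f (t + τ) - f t| ^ p ≤ 2 ^ p * Iσ := by
    have h2 : (2:ℝ) ^ (p-1) * ((∫ t in Icc A (1/2 - τ), |f (t + τ) - f (t + σ)| ^ p)
          + ∫ t in Icc A (1/2 - τ), |f (t + σ) - f t| ^ p) ≤ 2 ^ (p-1) * (Iσ + Iσ) := by
      apply mul_le_mul_of_nonneg_left _ (Real.rpow_nonneg (by norm_num) _)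
      exact add_le_add (htrans ▸ hmono1) hmono2
    calc _ ≤ _ := hstep1
      _ = _ := hsplit
      _ ≤ 2 ^ (p-1) * (Iσ + Iσ) := h2
      _ = 2 ^ p * Iσ := by rw [← h2p]; ring
  -- conclude
  rw [hg τ, hg σ]
  have hpow : (σ:ℝ) ^ (-p) = τ ^ (-p) * 2 ^ p := by
    rw [hσdef, Real.div_rpow hτ0.le (by norm_num : (0:ℝ) ≤ 2),
      Real.rpow_neg (by norm_num : (0:ℝ) ≤ 2)]
    rw [div_eq_mul_inv, inv_inv]
  calc τ ^ (-p) * ∫ t in Icc (-(1:ℝ)/2) (1/2 - τ), |f (t + τ) - f t| ^ p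
      ≤ τ ^ (-p) * (2 ^ p * Iσ) :=
        mul_le_mul_of_nonneg_left hItot (Real.rpow_nonneg hτ0.le _)
    _ = σ ^ (-p) * Iσ := by rw [hpow]; ring

private lemma gnonneg {p : ℝ} (f : ℝ → ℝ) (g : ℝ → ℝ)
    (hg : ∀ τ : ℝ, g τ =
      τ ^ (-p) * ∫ t in Icc (-(1:ℝ)/2) (1/2 - τ), |f (t + τ) - f t| ^ p)
    {τ : ℝ} (hτ : 0 < τ) : 0 ≤ g τ := by
  rw [hg τ]
  apply mul_nonneg (Real.rpow_nonneg hτ.le _)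
  exact setIntegral_nonneg measurableSet_Icc fun t _ => Real.rpow_nonneg (abs_nonneg _) p

private lemma iterate_doubling {p : ℝ} (hp : 1 ≤ p) (f : ℝ → ℝ) (hfm : Measurable f)
    (hf : ∀ K : Set ℝ, IsCompact K → IntegrableOn (fun t => |f t| ^ p) K)
    (g : ℝ → ℝ)
    (hg : ∀ τ : ℝ, g τ =
      τ ^ (-p) * ∫ t in Icc (-(1:ℝ)/2) (1/2 - τ), |f (t + τ) - f t| ^ p)
    {τ : ℝ} (hτ : τ ∈ Ioo (0:ℝ) 1) (k : ℕ) : g τ ≤ g ((2:ℝ)⁻¹ ^ k * τ) := by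
  induction k with
  | zero => simp
  | succ n ih =>
    have hmem : (2:ℝ)⁻¹ ^ n * τ ∈ Ioo (0:ℝ) 1 := by
      constructor
      · exact mul_pos (pow_pos (by norm_num) n) hτ.1
      · calc (2:ℝ)⁻¹ ^ n * τ ≤ 1 * τ := by
              apply mul_le_mul_of_nonneg_right _ hτ.1.le
              exact pow_le_one₀ (by norm_num) (by norm_num)
          _ < 1 := by simpa using hτ.2
    refine ih.trans ?_
    have := doubling hp f hfm hf g hg hmem
    have heq : (2:ℝ)⁻¹ ^ n * τ / 2 = (2:ℝ)⁻¹ ^ (n+1) * τ := by ring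
    rwa [heq] at this

private lemma keyfact {p : ℝ} (hp : 1 ≤ p) (f : ℝ → ℝ) (hfm : Measurable f)
    (hf : ∀ K : Set ℝ, IsCompact K → IntegrableOn (fun t => |f t| ^ p) K)
    (g : ℝ → ℝ)
    (hg : ∀ τ : ℝ, g τ =
      τ ^ (-p) * ∫ t in Icc (-(1:ℝ)/2) (1/2 - τ), |f (t + τ) - f t| ^ p)
    (hgint : IntegrableOn g (Ioo (0:ℝ) 1))
    {t : ℝ} (ht0 : 0 < t) (ht1 : t ≤ 1) :
    t / 2 * ∫ τ in Ioo (0:ℝ) 1, g τ ≤ ∫ τ in Ioo (0:ℝ) t, g τ := by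
  have hgnn : ∀ x ∈ Ioo (0:ℝ) 1, 0 ≤ g x := fun x hx => gnonneg f g hg hx.1
  -- choose dyadic c with t/2 < c ≤ t
  have hex : ∃ k : ℕ, (2:ℝ)⁻¹ ^ k ≤ t := by
    obtain ⟨k, hk⟩ := exists_pow_lt_of_lt_one ht0 (by norm_num : (2:ℝ)⁻¹ < 1)
    exact ⟨k, hk.le⟩
  classical
  set k := Nat.find hex with hk
  set c : ℝ := (2:ℝ)⁻¹ ^ k with hc
  have hct : c ≤ t := Nat.find_spec hex
  have hc0 : 0 < c := hc ▸ pow_pos (by norm_num : (0:ℝ) < 2⁻¹) k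
  have hc1 : c ≤ 1 := by
    rw [hc]; exact pow_le_one₀ (by norm_num) (by norm_num)
  have htc : t / 2 < c := by
    rcases Nat.eq_zero_or_pos k with h0 | hpos
    · rw [hc, h0]; simpa using by linarith
    · have hnot : ¬ ((2:ℝ)⁻¹ ^ (k-1) ≤ t) := Nat.find_min hex (by omega)
      push_neg at hnot
      have hk1 : k - 1 + 1 = k := Nat.succ_pred_eq_of_pos hpos
      have hck : c = (2:ℝ)⁻¹ ^ (k-1) * 2⁻¹ := by rw [hc, ← pow_succ, hk1]
      rw [hck]; linarith
  -- integrability pieces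
  have hgIoc1 : IntegrableOn g (Ioc (0:ℝ) 1) :=
    (integrableOn_Ioc_iff_integrableOn_Ioo).2 hgint
  have hgIocc : IntegrableOn g (Ioc (0:ℝ) c) := by
    rcases eq_or_lt_of_le hc1 with h | h
    · rw [h]; exact hgIoc1
    · exact hgint.mono_set (fun x hx => ⟨hx.1, lt_of_le_of_lt hx.2 h⟩)
  have hgc : IntervalIntegrable g volume 0 c :=
    (intervalIntegrable_iff_integrableOn_Ioc_of_le hc0.le).2 hgIocc
  have hcomp : IntervalIntegrable (fun u => g (c * u)) volume 0 1 := by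
    have := hgc.comp_mul_left (c := c)
    simpa [hc0.ne'] using this
  have hcompIoo : IntegrableOn (fun u => g (c * u)) (Ioo (0:ℝ) 1) := by
    have h1 : IntegrableOn (fun u => g (c * u)) (Ioc (0:ℝ) 1) :=
      (intervalIntegrable_iff_integrableOn_Ioc_of_le zero_le_one).1 hcomp
    exact h1.mono_set Ioo_subset_Ioc_self
  -- chain
  have step1 : ∫ τ in Ioo (0:ℝ) c, g τ ≤ ∫ τ in Ioo (0:ℝ) t, g τ := by
    refine setIntegral_mono_set (hgint.mono_set (fun x hx => ⟨hx.1, lt_of_lt_of_le hx.2 ht1⟩)) ?_ ?_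
    · filter_upwards [ae_restrict_mem measurableSet_Ioo] with x hx
      exact hgnn x ⟨hx.1, lt_of_lt_of_le hx.2 ht1⟩
    · exact HasSubset.Subset.eventuallyLE (Ioo_subset_Ioo le_rfl hct)
  have step2 : ∫ τ in Ioo (0:ℝ) c, g τ = c * ∫ u in Ioo (0:ℝ) 1, g (c * u) := by
    rw [← MeasureTheory.integral_Ioc_eq_integral_Ioo, ← MeasureTheory.integral_Ioc_eq_integral_Ioo,
      ← intervalIntegral.integral_of_le hc0.le, ← intervalIntegral.integral_of_le zero_le_one]
    have := intervalIntegral.smul_integral_comp_mul_left g c (a := 0) (b := 1)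
    simp only [mul_zero, mul_one, smul_eq_mul] at this
    rw [← this]
  have step3 : ∫ u in Ioo (0:ℝ) 1, g u ≤ ∫ u in Ioo (0:ℝ) 1, g (c * u) := by
    refine setIntegral_mono_on hgint hcompIoo measurableSet_Ioo ?_
    intro x hx
    have := iterate_doubling hp f hfm hf g hg hx k
    rwa [← hc] at this
  have hA0 : 0 ≤ ∫ u in Ioo (0:ℝ) 1, g u :=
    setIntegral_nonneg measurableSet_Ioo hgnn
  calc t / 2 * ∫ τ in Ioo (0:ℝ) 1, g τ ≤ c * ∫ τ in Ioo (0:ℝ) 1, g τ :=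
        mul_le_mul_of_nonneg_right htc.le hA0
    _ ≤ c * ∫ u in Ioo (0:ℝ) 1, g (c * u) := mul_le_mul_of_nonneg_left step3 hc0.le
    _ = ∫ τ in Ioo (0:ℝ) c, g τ := step2.symm
    _ ≤ ∫ τ in Ioo (0:ℝ) t, g τ := step1

theorem stmt3 (p : ℝ) (hp : 1 ≤ p) (f : ℝ → ℝ) (hfm : Measurable f)
    (hf : ∀ K : Set ℝ, IsCompact K → IntegrableOn (fun t => |f t| ^ p) K)
    (g : ℝ → ℝ)
    (hg : ∀ τ : ℝ, g τ =
      τ ^ (-p) * ∫ t in Icc (-(1:ℝ)/2) (1/2 - τ), |f (t + τ) - f t| ^ p)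
    (φ : ℝ → ℝ) (hφ0 : ∀ τ ∈ Ioo (0:ℝ) 1, 0 ≤ φ τ)
    (hφmono : AntitoneOn φ (Ioo (0:ℝ) 1))
    (hgint : IntegrableOn g (Ioo (0:ℝ) 1))
    (hφint : IntegrableOn φ (Ioo (0:ℝ) 1))
    (hgφint : IntegrableOn (fun τ => g τ * φ τ) (Ioo (0:ℝ) 1)) :
    (1/2) * (∫ τ in Ioo (0:ℝ) 1, g τ) * (∫ τ in Ioo (0:ℝ) 1, φ τ)
      ≤ ∫ τ in Ioo (0:ℝ) 1, g τ * φ τ := by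
  have hgnnIoo : ∀ x ∈ Ioo (0:ℝ) 1, 0 ≤ g x := fun x hx => gnonneg f g hg hx.1
  set ν : Measure ℝ := volume.restrict (Ioo (0:ℝ) 1) with hν
  have hgnn : 0 ≤ᵐ[ν] g := by
    rw [hν]; filter_upwards [ae_restrict_mem measurableSet_Ioo] with x hx using hgnnIoo x hx
  have hφnn : 0 ≤ᵐ[ν] φ := by
    rw [hν]; filter_upwards [ae_restrict_mem measurableSet_Ioo] with x hx using hφ0 x hx
  have hgφnn : 0 ≤ᵐ[ν] fun τ => g τ * φ τ := by
    rw [hν]; filter_upwards [ae_restrict_mem measurableSet_Ioo] with x hx using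
      mul_nonneg (hgnnIoo x hx) (hφ0 x hx)
  set G : ℝ → ENNReal := fun s => ENNReal.ofReal (g s) with hG
  set Φ : ℝ → ENNReal := fun s => ENNReal.ofReal (φ s) with hΦ
  have hGae : AEMeasurable G ν := hgint.1.aemeasurable.ennreal_ofReal
  have hφae : AEMeasurable φ ν := hφint.1.aemeasurable
  have hΦae : AEMeasurable Φ ν := hφae.ennreal_ofReal
  set μ : Measure ℝ := ν.withDensity G with hμ
  have hac : μ ≪ ν := withDensity_absolutelyContinuous ν G
  have hA : ENNReal.ofReal (∫ τ in Ioo (0:ℝ) 1, g τ) = ∫⁻ s, G s ∂ν :=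
    ofReal_integral_eq_lintegral_ofReal hgint hgnn
  have hB : ENNReal.ofReal (∫ τ in Ioo (0:ℝ) 1, φ τ) = ∫⁻ s, Φ s ∂ν :=
    ofReal_integral_eq_lintegral_ofReal hφint hφnn
  have hT : ENNReal.ofReal (∫ τ in Ioo (0:ℝ) 1, g τ * φ τ)
      = ∫⁻ s, ENNReal.ofReal (g s * φ s) ∂ν :=
    ofReal_integral_eq_lintegral_ofReal hgφint hgφnn
  have hGΦ : ∫⁻ s, ENNReal.ofReal (g s * φ s) ∂ν = ∫⁻ s, (G s * Φ s) ∂ν := by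
    apply lintegral_congr_ae
    filter_upwards [hgnn] with x hx
    rw [hG, hΦ, ENNReal.ofReal_mul hx]
  have hTμ : ∫⁻ s, (G s * Φ s) ∂ν = ∫⁻ s, Φ s ∂μ := by
    rw [hμ, lintegral_withDensity_eq_lintegral_mul₀ hGae hΦae]; rfl
  have hφnnμ : 0 ≤ᵐ[μ] φ := hφnn.filter_mono hac.ae_le
  have hφaeμ : AEMeasurable φ μ := hφae.mono_ac hac
  have hlcμ : ∫⁻ s, Φ s ∂μ = ∫⁻ l in Ioi (0:ℝ), μ {a | l < φ a} :=
    lintegral_eq_lintegral_meas_lt μ hφnnμ hφaeμ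
  have hlcν : ∫⁻ s, Φ s ∂ν = ∫⁻ l in Ioi (0:ℝ), ν {a | l < φ a} :=
    lintegral_eq_lintegral_meas_lt ν hφnn hφae
  have hAfin : (∫⁻ s, G s ∂ν) ≠ ⊤ := by rw [← hA]; exact ENNReal.ofReal_ne_top
  have hA0 : 0 ≤ ∫ τ in Ioo (0:ℝ) 1, g τ := setIntegral_nonneg measurableSet_Ioo hgnnIoo
  -- per-level-set claim
  have claim : ∀ l : ℝ, 0 < l →
      ENNReal.ofReal (1/2) * (∫⁻ s, G s ∂ν) * ν {a | l < φ a} ≤ μ {a | l < φ a} := by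
    intro l hl
    set S : Set ℝ := {a | l < φ a} with hS
    by_cases hSI : (S ∩ Ioo (0:ℝ) 1).Nonempty
    · obtain ⟨a₀, ha₀S, ha₀I⟩ := hSI
      have hbdd : BddAbove (S ∩ Ioo (0:ℝ) 1) := ⟨1, fun x hx => hx.2.2.le⟩
      set t := sSup (S ∩ Ioo (0:ℝ) 1) with htdef
      have ht0 : 0 < t := lt_of_lt_of_le ha₀I.1 (le_csSup hbdd ⟨ha₀S, ha₀I⟩)
      have ht1 : t ≤ 1 := csSup_le ⟨a₀, ha₀S, ha₀I⟩ (fun x hx => hx.2.2.le)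
      have hsub1 : Ioo 0 t ⊆ S := by
        intro b hb
        obtain ⟨a, haSI, hba⟩ := exists_lt_of_lt_csSup (⟨a₀, ha₀S, ha₀I⟩ : (S ∩ Ioo (0:ℝ) 1).Nonempty) hb.2
        have hbI : b ∈ Ioo (0:ℝ) 1 := ⟨hb.1, hba.trans haSI.2.2⟩
        exact lt_of_lt_of_le haSI.1 (hφmono hbI haSI.2 hba.le)
      have hsub2 : S ⊆ Ioc 0 t ∪ (Ioo (0:ℝ) 1)ᶜ := by
        intro a ha
        by_cases haI : a ∈ Ioo (0:ℝ) 1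
        · have h0a : 0 < a := haI.1
          exact Or.inl ⟨h0a, le_csSup hbdd ⟨ha, haI⟩⟩
        · exact Or.inr haI
      have hν_le : ν S ≤ ENNReal.ofReal t := by
        calc ν S ≤ ν (Ioc 0 t ∪ (Ioo (0:ℝ) 1)ᶜ) := measure_mono hsub2
          _ ≤ ν (Ioc 0 t) + ν ((Ioo (0:ℝ) 1)ᶜ) := measure_union_le _ _
          _ = ν (Ioc 0 t) := by
              rw [hν, Measure.restrict_apply (measurableSet_Ioo.compl)]
              simp
          _ ≤ volume (Ioc (0:ℝ) t) := by
              rw [hν, Measure.restrict_apply measurableSet_Ioc]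
              exact measure_mono inter_subset_left
          _ = ENNReal.ofReal t := by rw [Real.volume_Ioc]; norm_num
      have hμ_ge : ∫⁻ s in Ioo (0:ℝ) t, G s ≤ μ S := by
        have h2 : μ (Ioo 0 t) = ∫⁻ s in Ioo (0:ℝ) t, G s ∂ν := by
          rw [hμ, withDensity_apply _ measurableSet_Ioo]
        have h3 : ∫⁻ s in Ioo (0:ℝ) t, G s ∂ν = ∫⁻ s in Ioo (0:ℝ) t, G s := by
          rw [hν, Measure.restrict_restrict measurableSet_Ioo,
            Set.inter_eq_left.2 (Ioo_subset_Ioo le_rfl ht1)]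
        calc ∫⁻ s in Ioo (0:ℝ) t, G s = μ (Ioo 0 t) := by rw [h2, h3]
          _ ≤ μ S := measure_mono hsub1
      have hgnnt : 0 ≤ᵐ[volume.restrict (Ioo (0:ℝ) t)] g := by
        filter_upwards [ae_restrict_mem measurableSet_Ioo] with x hx using
          hgnnIoo x ⟨hx.1, lt_of_lt_of_le hx.2 ht1⟩
      have h4 : ENNReal.ofReal (∫ τ in Ioo (0:ℝ) t, g τ) = ∫⁻ s in Ioo (0:ℝ) t, G s :=
        ofReal_integral_eq_lintegral_ofReal (hgint.mono_set (Ioo_subset_Ioo le_rfl ht1)) hgnnt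
      have hkey : ENNReal.ofReal (t/2 * ∫ τ in Ioo (0:ℝ) 1, g τ) ≤ ∫⁻ s in Ioo (0:ℝ) t, G s := by
        rw [← h4]
        exact ENNReal.ofReal_le_ofReal (keyfact hp f hfm hf g hg hgint ht0 ht1)
      calc ENNReal.ofReal (1/2) * (∫⁻ s, G s ∂ν) * ν S
          ≤ ENNReal.ofReal (1/2) * (∫⁻ s, G s ∂ν) * ENNReal.ofReal t :=
            mul_le_mul_right hν_le _
        _ = ENNReal.ofReal (t/2 * ∫ τ in Ioo (0:ℝ) 1, g τ) := by
            rw [← hA, ← ENNReal.ofReal_mul (by norm_num : (0:ℝ) ≤ 1/2),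
              ← ENNReal.ofReal_mul (by positivity)]
            congr 1
            ring
        _ ≤ ∫⁻ s in Ioo (0:ℝ) t, G s := hkey
        _ ≤ μ S := hμ_ge
    · have hνS : ν S = 0 := by
        have hsub : S ⊆ (Ioo (0:ℝ) 1)ᶜ := fun a ha haI => hSI ⟨a, ha, haI⟩
        have h1 : ν S ≤ ν ((Ioo (0:ℝ) 1)ᶜ) := measure_mono hsub
        have h2 : ν ((Ioo (0:ℝ) 1)ᶜ) = 0 := by
          rw [hν, Measure.restrict_apply (measurableSet_Ioo.compl)]
          simp
        exact le_antisymm (h2 ▸ h1) zero_le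
      rw [hνS, mul_zero]
      exact zero_le
  -- integrate the claim
  have hmain : ENNReal.ofReal (1/2) * (∫⁻ s, G s ∂ν) * (∫⁻ s, Φ s ∂ν) ≤ ∫⁻ s, Φ s ∂μ := by
    rw [hlcμ, hlcν, ← lintegral_const_mul' (ENNReal.ofReal (1/2) * (∫⁻ s, G s ∂ν)) _
      (ENNReal.mul_ne_top ENNReal.ofReal_ne_top hAfin)]
    refine lintegral_mono_ae ?_
    filter_upwards [ae_restrict_mem measurableSet_Ioi] with l hl using claim l hl
  have hchain : ENNReal.ofReal ((1/2) * (∫ τ in Ioo (0:ℝ) 1, g τ) * ∫ τ in Ioo (0:ℝ) 1, φ τ)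
      ≤ ENNReal.ofReal (∫ τ in Ioo (0:ℝ) 1, g τ * φ τ) := by
    rw [hT, hGΦ, hTμ]
    calc ENNReal.ofReal ((1/2) * (∫ τ in Ioo (0:ℝ) 1, g τ) * ∫ τ in Ioo (0:ℝ) 1, φ τ)
        = ENNReal.ofReal ((1/2) * ∫ τ in Ioo (0:ℝ) 1, g τ)
            * ENNReal.ofReal (∫ τ in Ioo (0:ℝ) 1, φ τ) := by
          rw [← ENNReal.ofReal_mul (by positivity)]
      _ = ENNReal.ofReal (1/2) * (∫⁻ s, G s ∂ν) * (∫⁻ s, Φ s ∂ν) := by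
          rw [← hA, ← hB, ← ENNReal.ofReal_mul (by norm_num : (0:ℝ) ≤ 1/2)]
      _ ≤ ∫⁻ s, Φ s ∂μ := hmain
  have hgphinn : 0 ≤ ∫ τ in Ioo (0:ℝ) 1, g τ * φ τ := integral_nonneg_of_ae hgφnn
  exact (ENNReal.ofReal_le_ofReal_iff hgphinn).1 hchain
end

section
/- Let g : (0,1) → [0,∞) be measurable with g(τ) ≤ g(τ/2) for all τ ∈ (0,1), and let φ : (0,1) → [0,∞) be nonincreasing. Then ∫_0^1 g(τ)φ(τ) dτ ≥ (1/2) (∫_0^1 g(τ) dτ)(∫_0^1 φ(τ) dτ). -/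
set_option maxHeartbeats 1000000

open MeasureTheory Set
open scoped ENNReal

lemma scale_lemma (G : ℝ → ℝ≥0∞) (hG : Measurable G) (c d : ℝ) :
    ∫⁻ τ in Ioo c d, G (τ/2) = 2 * ∫⁻ u in Ioo (c/2) (d/2), G u := by
  have hpre : Ioo (c/2) (d/2) = (fun x : ℝ => 2*x) ⁻¹' (Ioo c d) := by
    ext x
    simp only [mem_Ioo, mem_preimage]
    constructor <;> intro h <;> constructor <;> nlinarith [h.1, h.2]
  have hmeas : Measurable (fun x : ℝ => 2*x) := (measurable_id.const_mul 2)
  have hmap : Measure.map (fun x : ℝ => 2*x) (volume.restrict (Ioo (c/2) (d/2)))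
      = ENNReal.ofReal (1/2) • volume.restrict (Ioo c d) := by
    rw [hpre, ← Measure.restrict_map hmeas measurableSet_Ioo,
      Real.map_volume_mul_left (two_ne_zero), Measure.restrict_smul,
      show |(2:ℝ)⁻¹| = 1/2 by rw [abs_of_pos] <;> norm_num]
  have h1 : (volume.restrict (Ioo c d)) =
      Measure.map (fun x : ℝ => 2*x) ((2:ℝ≥0∞) • volume.restrict (Ioo (c/2) (d/2))) := by
    rw [Measure.map_smul, hmap, smul_smul,
      show ((2:ℝ≥0∞) * ENNReal.ofReal (1/2)) = 1 by
        rw [ENNReal.ofReal_div_of_pos] <;> simp [ENNReal.mul_inv_cancel], one_smul]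
  have hGc : Measurable (fun τ : ℝ => G (τ/2)) := hG.comp (measurable_id.div_const 2)
  rw [h1, lintegral_map hGc hmeas]
  simp only [lintegral_smul_measure]
  congr 1
  apply lintegral_congr
  intro x
  norm_num

lemma partition_lemma (G : ℝ → ℝ≥0∞) (x : ℝ) (hx : 0 < x) (k : ℕ) :
    ∫⁻ τ in Ioo 0 (x/2^k), G τ = ∑' n : ℕ, ∫⁻ τ in Ioo (x/2^(n+k+1)) (x/2^(n+k)), G τ := by
  set A : ℕ → Set ℝ := fun n => Ioo (x/2^(n+k+1)) (x/2^(n+k)) with hA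
  have hmono : ∀ i j : ℕ, i ≤ j → x/2^j ≤ x/2^i := by
    intro i j hij
    apply div_le_div_of_nonneg_left hx.le (by positivity)
    exact pow_le_pow_right₀ (by norm_num) hij
  have hdisj : Pairwise (Function.onFun Disjoint A) := by
    have key : ∀ n m : ℕ, n < m → Disjoint (A n) (A m) := by
      intro n m hnm
      apply Set.disjoint_left.mpr
      rintro t ⟨ht1, ht2⟩ ⟨hs1, hs2⟩
      have : x/2^(m+k) ≤ x/2^(n+k+1) := hmono _ _ (by omega)
      linarith
    intro n m hnm
    rcases lt_or_gt_of_ne hnm with h | h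
    · exact key n m h
    · exact (key m n h).symm
  have hsub : ∀ n, A n ⊆ Ioo 0 (x/2^k) := by
    intro n t ⟨ht1, ht2⟩
    constructor
    · have : (0:ℝ) < x/2^(n+k+1) := by positivity
      linarith
    · exact lt_of_lt_of_le ht2 (hmono k (n+k) (by omega))
  have hcover : Ioo 0 (x/2^k) \ (⋃ n, A n) ⊆ Set.range (fun j : ℕ => x/2^j) := by
    rintro y ⟨⟨hy0, hyk⟩, hyA⟩
    by_contra hyr
    apply hyA
    have hex : ∃ j : ℕ, x/2^j < y := by
      obtain ⟨j, hj⟩ := exists_pow_lt_of_lt_one (div_pos hy0 hx) (by norm_num : (1:ℝ)/2 < 1)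
      refine ⟨j, ?_⟩
      have : x * ((1:ℝ)/2)^j < x * (y/x) := by
        apply mul_lt_mul_of_pos_left hj hx
      rw [mul_div_cancel₀ _ (ne_of_gt hx)] at this
      calc x/2^j = x * ((1:ℝ)/2)^j := by rw [div_pow]; ring
        _ < y := this
    classical
    set j₀ := Nat.find hex with hj₀
    have hj₀p : x/2^j₀ < y := Nat.find_spec hex
    have hj₀min : ∀ j < j₀, ¬ (x/2^j < y) := fun j hj => Nat.find_min hex hj
    have hj₀k : k + 1 ≤ j₀ := by
      by_contra hc
      push_neg at hc
      have hj₀le : j₀ ≤ k := by omega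
      have := hmono j₀ k hj₀le
      linarith
    refine mem_iUnion.mpr ⟨j₀ - k - 1, ?_⟩
    have he : j₀ - k - 1 + k + 1 = j₀ := by omega
    have he2 : j₀ - k - 1 + k = j₀ - 1 := by omega
    rw [hA]
    simp only [mem_Ioo]
    rw [he, he2]
    refine ⟨hj₀p, ?_⟩
    have hne : y ≠ x/2^(j₀-1) := fun hcon => hyr ⟨j₀ - 1, hcon.symm⟩
    have := hj₀min (j₀ - 1) (by omega)
    push_neg at this
    exact lt_of_le_of_ne this hne
  have hae : Ioo 0 (x/2^k) =ᵐ[volume] ⋃ n, A n := by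
    rw [Filter.eventuallyEq_set]
    apply MeasureTheory.ae_iff.mpr
    refine measure_mono_null ?_ (Set.Countable.measure_zero (Set.countable_range (fun j : ℕ => x/2^j)) _)
    intro y hy
    simp only [mem_setOf_eq] at hy
    by_cases hmem : y ∈ Ioo 0 (x/2^k)
    · exact hcover ⟨hmem, by tauto⟩
    · have : y ∈ ⋃ n, A n := by tauto
      exact absurd (iUnion_subset hsub this) hmem
  rw [setLIntegral_congr hae, lintegral_iUnion (fun n => measurableSet_Ioo) hdisj]

lemma geom_nat_lemma : ∀ M : ℕ, (∑ n ∈ Finset.range M, 2^(M-n) : ℕ) = 2^(M+1) - 2 := by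
  intro M
  induction M with
  | zero => simp
  | succ M ih =>
      rw [Finset.sum_range_succ']
      simp only [Nat.sub_zero]
      have h : ∀ n ∈ Finset.range M, 2^(M+1-(n+1)) = 2^(M-n) := by
        intro n hn; congr 1; omega
      rw [Finset.sum_congr rfl h, ih]
      have h2 : 2 ≤ 2^(M+1) := by
        calc 2 = 2^1 := rfl
          _ ≤ 2^(M+1) := Nat.pow_le_pow_right (by norm_num) (by omega)
      omega

lemma star_lemma (g : ℝ → ℝ) (hgm : Measurable g)
    (hhalf : ∀ τ ∈ Ioo (0:ℝ) 1, g τ ≤ g (τ / 2)) (m : ℕ) (x : ℝ)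
    (hx1 : 1/2 < x) (hx2 : x ≤ 1) :
    ((2:ℝ≥0∞)^(m+1))⁻¹ * ∫⁻ τ in Ioo (0:ℝ) 1, ENNReal.ofReal (g τ)
      ≤ ∫⁻ τ in Ioo 0 (x/2^m), ENNReal.ofReal (g τ) := by
  have hx0 : 0 < x := by linarith
  set G : ℝ → ℝ≥0∞ := fun τ => ENNReal.ofReal (g τ) with hGdef
  have hG : Measurable G := ENNReal.measurable_ofReal.comp hgm
  have hGc : Measurable (fun τ : ℝ => G (τ/2)) := hG.comp (measurable_id.div_const 2)
  set d : ℕ → ℝ≥0∞ := fun j => ∫⁻ τ in Ioo (x/2^(j+1)) (x/2^j), G τ with hd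
  -- powers of x/2^j facts
  have hxj1 : ∀ j : ℕ, x/2^j ≤ 1 := by
    intro j
    rw [div_le_one (by positivity)]
    calc x ≤ 1 := hx2
      _ ≤ 2^j := one_le_pow₀ (by norm_num)
  have hxjpos : ∀ j : ℕ, 0 < x/2^j := fun j => by positivity
  -- doubling step
  have hmono_step : ∀ (c e : ℝ), 0 < c → e ≤ 1 →
      ∫⁻ τ in Ioo c e, G τ ≤ 2 * ∫⁻ τ in Ioo (c/2) (e/2), G τ := by
    intro c e hc he
    rw [← scale_lemma G hG c e]
    apply setLIntegral_mono hGc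
    intro τ ⟨ht1, ht2⟩
    exact ENNReal.ofReal_le_ofReal (hhalf τ ⟨by linarith, by linarith⟩)
  have hdn : ∀ j, d j ≤ 2 * d (j+1) := by
    intro j
    have := hmono_step (x/2^(j+1)) (x/2^j) (hxjpos _) (hxj1 _)
    have e1 : x/2^(j+1)/2 = x/2^(j+1+1) := by rw [div_div, ← pow_succ]
    have e2 : x/2^j/2 = x/2^(j+1) := by rw [div_div, ← pow_succ]
    rw [e1, e2] at this
    exact this
  have hpow : ∀ j k, d j ≤ 2^k * d (j+k) := by
    intro j k
    induction k with
    | zero => simp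
    | succ k ih =>
        calc d j ≤ 2^k * d (j+k) := ih
          _ ≤ 2^k * (2 * d (j+k+1)) := by gcongr; exact hdn (j+k)
          _ = 2^(k+1) * d (j+k+1) := by ring
  have hpart : ∀ k : ℕ, ∫⁻ τ in Ioo 0 (x/2^k), G τ = ∑' n : ℕ, d (n+k) := by
    intro k
    rw [partition_lemma G x hx0 k]
  -- tail estimate
  have htail : ∫⁻ τ in Ioo x 1, G τ ≤ 2 * d 0 := by
    calc ∫⁻ τ in Ioo x 1, G τ ≤ ∫⁻ τ in Ioo x 1, G (τ/2) := by
          apply setLIntegral_mono hGc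
          intro τ ⟨ht1, ht2⟩
          exact ENNReal.ofReal_le_ofReal (hhalf τ ⟨by linarith, ht2⟩)
      _ = 2 * ∫⁻ τ in Ioo (x/2) (1/2), G τ := scale_lemma G hG x 1
      _ ≤ 2 * ∫⁻ τ in Ioo (x/2) x, G τ := by
          gcongr
      _ = 2 * d 0 := by norm_num [hd]
  -- split (0,1)
  have hsplit : ∫⁻ τ in Ioo (0:ℝ) 1, G τ
      ≤ (∫⁻ τ in Ioo 0 x, G τ) + ∫⁻ τ in Ioo x 1, G τ := by
    calc ∫⁻ τ in Ioo (0:ℝ) 1, G τ ≤ ∫⁻ τ in (Ioo 0 x ∪ Ico x 1), G τ := by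
          apply lintegral_mono_set
          intro t ⟨ht1, ht2⟩
          by_cases h : t < x
          · exact Or.inl ⟨ht1, h⟩
          · exact Or.inr ⟨le_of_not_gt h, ht2⟩
      _ ≤ (∫⁻ τ in Ioo 0 x, G τ) + ∫⁻ τ in Ico x 1, G τ := lintegral_union_le _ _ _
      _ = (∫⁻ τ in Ioo 0 x, G τ) + ∫⁻ τ in Ioo x 1, G τ := by
          rw [setLIntegral_congr (Ioo_ae_eq_Ico (a := x) (b := (1:ℝ))).symm]
  set S' : ℝ≥0∞ := ∫⁻ τ in Ioo 0 (x/2^m), G τ with hS'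
  have hSge : 2 * d m ≤ S' := by
    have h1 : ∀ n : ℕ, (2⁻¹ : ℝ≥0∞)^n * d m ≤ d (n+m) := by
      intro n
      have := hpow m n
      calc (2⁻¹ : ℝ≥0∞)^n * d m ≤ (2⁻¹:ℝ≥0∞)^n * (2^n * d (m+n)) :=
            mul_le_mul_right this _
        _ = ((2⁻¹:ℝ≥0∞)^n * 2^n) * d (m+n) := by ring
        _ = d (n+m) := by
            rw [← ENNReal.inv_pow, ENNReal.inv_mul_cancel (by positivity)
              (by exact ENNReal.pow_ne_top ENNReal.ofNat_ne_top), one_mul, Nat.add_comm]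
    calc 2 * d m = (∑' n : ℕ, (2⁻¹:ℝ≥0∞)^n) * d m := by
          rw [ENNReal.tsum_geometric, ENNReal.one_sub_inv_two, inv_inv]
      _ = ∑' n : ℕ, (2⁻¹:ℝ≥0∞)^n * d m := ENNReal.tsum_mul_right.symm
      _ ≤ ∑' n : ℕ, d (n+m) := ENNReal.tsum_le_tsum h1
      _ = S' := (hpart m).symm
  have hcov : ∀ k : ℕ, ∫⁻ τ in Ioo 0 x, G τ
      ≤ ∑ n ∈ Finset.range k, d n + ∫⁻ τ in Ioo 0 (x/2^k), G τ := by
    intro k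
    induction k with
    | zero => simp
    | succ k ih =>
        have hstep : ∫⁻ τ in Ioo 0 (x/2^k), G τ ≤ (∫⁻ τ in Ioo 0 (x/2^(k+1)), G τ) + d k := by
          have e2 : x/2^k/2 = x/2^(k+1) := by rw [div_div, ← pow_succ]
          calc ∫⁻ τ in Ioo 0 (x/2^k), G τ
              ≤ ∫⁻ τ in (Ioo 0 (x/2^(k+1)) ∪ Ico (x/2^(k+1)) (x/2^k)), G τ := by
                apply lintegral_mono_set
                intro t ⟨ht1, ht2⟩
                by_cases h : t < x/2^(k+1)
                · exact Or.inl ⟨ht1, h⟩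
                · exact Or.inr ⟨le_of_not_gt h, ht2⟩
            _ ≤ (∫⁻ τ in Ioo 0 (x/2^(k+1)), G τ) + ∫⁻ τ in Ico (x/2^(k+1)) (x/2^k), G τ :=
                lintegral_union_le _ _ _
            _ = (∫⁻ τ in Ioo 0 (x/2^(k+1)), G τ) + d k := by
                rw [setLIntegral_congr (Ioo_ae_eq_Ico (a := x/2^(k+1)) (b := x/2^k)).symm]
        calc ∫⁻ τ in Ioo 0 x, G τ ≤ ∑ n ∈ Finset.range k, d n + ∫⁻ τ in Ioo 0 (x/2^k), G τ := ih
          _ ≤ ∑ n ∈ Finset.range k, d n + ((∫⁻ τ in Ioo 0 (x/2^(k+1)), G τ) + d k) := by gcongr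
          _ = ∑ n ∈ Finset.range (k+1), d n + ∫⁻ τ in Ioo 0 (x/2^(k+1)), G τ := by
              rw [Finset.sum_range_succ]; ring
  have hfin : ∑ n ∈ Finset.range m, d n ≤ ((2^(m+1) - 2 : ℕ) : ℝ≥0∞) * d m := by
    have hnat := geom_nat_lemma m
    calc ∑ n ∈ Finset.range m, d n ≤ ∑ n ∈ Finset.range m, (2:ℝ≥0∞)^(m-n) * d m := by
          apply Finset.sum_le_sum
          intro n hn
          have h := hpow n (m-n)
          rwa [show n + (m-n) = m by
            have := Finset.mem_range.mp hn; omega] at h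
      _ = (∑ n ∈ Finset.range m, (2:ℝ≥0∞)^(m-n)) * d m := by rw [Finset.sum_mul]
      _ = ((∑ n ∈ Finset.range m, 2^(m-n) : ℕ) : ℝ≥0∞) * d m := by push_cast; ring
      _ = ((2^(m+1) - 2 : ℕ) : ℝ≥0∞) * d m := by rw [hnat]
  have hd0 : 2 * d 0 ≤ ((2^(m+1) : ℕ) : ℝ≥0∞) * d m := by
    have h0 := hpow 0 m
    simp only [Nat.zero_add] at h0
    calc 2 * d 0 ≤ 2 * ((2:ℝ≥0∞)^m * d m) := by gcongr
      _ = ((2^(m+1):ℕ):ℝ≥0∞) * d m := by push_cast; ring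
  have key : ∫⁻ τ in Ioo (0:ℝ) 1, G τ ≤ ((2^(m+1) : ℕ) : ℝ≥0∞) * S' := by
    have h2le : 2 ≤ 2^(m+1) := by
      calc 2 = 2^1 := rfl
        _ ≤ 2^(m+1) := Nat.pow_le_pow_right (by norm_num) (by omega)
    have hcombine : ((2^(m+1) - 2 : ℕ) : ℝ≥0∞) * d m + ((2^(m+1):ℕ):ℝ≥0∞) * d m
        = ((2^(m+1) - 1 : ℕ) : ℝ≥0∞) * (2 * d m) := by
      have hn : (2^(m+1)-2) + 2^(m+1) = (2^(m+1)-1)*2 := by omega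
      calc ((2^(m+1) - 2 : ℕ) : ℝ≥0∞) * d m + ((2^(m+1):ℕ):ℝ≥0∞) * d m
          = (((2^(m+1) - 2 : ℕ) : ℝ≥0∞) + ((2^(m+1):ℕ):ℝ≥0∞)) * d m := by rw [add_mul]
        _ = ((((2^(m+1)-1)*2 : ℕ)) : ℝ≥0∞) * d m := by rw [← Nat.cast_add, hn]
        _ = ((2^(m+1) - 1 : ℕ) : ℝ≥0∞) * ((2:ℕ) : ℝ≥0∞) * d m := by rw [Nat.cast_mul]
        _ = ((2^(m+1) - 1 : ℕ) : ℝ≥0∞) * (2 * d m) := by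
            rw [mul_assoc]
            norm_num
    calc ∫⁻ τ in Ioo (0:ℝ) 1, G τ
        ≤ (∫⁻ τ in Ioo 0 x, G τ) + ∫⁻ τ in Ioo x 1, G τ := hsplit
      _ ≤ (∑ n ∈ Finset.range m, d n + S') + 2 * d 0 := by
          apply add_le_add (hcov m) htail
      _ ≤ (((2^(m+1) - 2 : ℕ) : ℝ≥0∞) * d m + S') + ((2^(m+1):ℕ):ℝ≥0∞) * d m := by
          gcongr
      _ = (((2^(m+1) - 2 : ℕ) : ℝ≥0∞) * d m + ((2^(m+1):ℕ):ℝ≥0∞) * d m) + S' := by ring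
      _ = ((2^(m+1) - 1 : ℕ) : ℝ≥0∞) * (2 * d m) + S' := by rw [hcombine]
      _ ≤ ((2^(m+1) - 1 : ℕ) : ℝ≥0∞) * S' + S' := by gcongr
      _ = ((2^(m+1) - 1 : ℕ) : ℝ≥0∞) * S' + 1 * S' := by rw [one_mul]
      _ = (((2^(m+1) - 1 : ℕ) : ℝ≥0∞) + 1) * S' := by rw [add_mul]
      _ = ((2^(m+1) : ℕ) : ℝ≥0∞) * S' := by
          congr 1
          have hn2 : (2^(m+1)-1) + 1 = 2^(m+1) := by omega
          calc ((2^(m+1) - 1 : ℕ) : ℝ≥0∞) + 1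
              = ((2^(m+1) - 1 : ℕ) : ℝ≥0∞) + ((1:ℕ):ℝ≥0∞) := by norm_num
            _ = (((2^(m+1) - 1) + 1 : ℕ) : ℝ≥0∞) := by rw [← Nat.cast_add]
            _ = ((2^(m+1) : ℕ) : ℝ≥0∞) := by rw [hn2]
  calc ((2:ℝ≥0∞)^(m+1))⁻¹ * ∫⁻ τ in Ioo (0:ℝ) 1, G τ
      ≤ ((2:ℝ≥0∞)^(m+1))⁻¹ * (((2^(m+1) : ℕ) : ℝ≥0∞) * S') := by gcongr
    _ = S' := by
        rw [show ((2^(m+1):ℕ):ℝ≥0∞) = (2:ℝ≥0∞)^(m+1) by push_cast; ring, ← mul_assoc,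
          ENNReal.inv_mul_cancel (by positivity) (ENNReal.pow_ne_top ENNReal.ofNat_ne_top), one_mul]

lemma star_all (g : ℝ → ℝ) (hgm : Measurable g)
    (hhalf : ∀ τ ∈ Ioo (0:ℝ) 1, g τ ≤ g (τ / 2)) (a : ℝ) (ha0 : 0 < a) (ha1 : a ≤ 1) :
    ENNReal.ofReal (a/2) * ∫⁻ τ in Ioo (0:ℝ) 1, ENNReal.ofReal (g τ)
      ≤ ∫⁻ τ in Ioo 0 a, ENNReal.ofReal (g τ) := by
  have hex : ∃ n : ℕ, 1 < a * 2^n := by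
    obtain ⟨n, hn⟩ := pow_unbounded_of_one_lt (1/a) (by norm_num : (1:ℝ) < 2)
    exact ⟨n, by rw [div_lt_iff₀ ha0] at hn; nlinarith⟩
  classical
  set n₀ := Nat.find hex with hn₀
  have hspec : 1 < a * 2^n₀ := Nat.find_spec hex
  have hn₀pos : 1 ≤ n₀ := by
    rcases Nat.eq_zero_or_pos n₀ with h | h
    · exfalso; rw [h] at hspec; simp at hspec; linarith
    · exact h
  set m := n₀ - 1 with hm
  have hmin : ¬ (1 < a * 2^m) := Nat.find_min hex (by omega)
  push_neg at hmin
  set x := a * 2^m with hxdef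
  have hx2 : x ≤ 1 := hmin
  have hx1 : 1/2 < x := by
    have : m + 1 = n₀ := by omega
    have h2 : 1 < a * 2^(m+1) := by rw [this]; exact hspec
    rw [pow_succ] at h2
    nlinarith
  have hax : a = x/2^m := by
    field_simp [hxdef]
    exact hxdef.symm
  have hle : ENNReal.ofReal (a/2) ≤ ((2:ℝ≥0∞)^(m+1))⁻¹ := by
    have h1 : a/2 ≤ ((2:ℝ)^(m+1))⁻¹ := by
      rw [hax]
      rw [div_div, ← pow_succ]
      rw [div_le_iff₀ (by positivity : (0:ℝ) < 2^(m+1))]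
      calc x ≤ 1 := hx2
        _ = ((2:ℝ)^(m+1))⁻¹ * 2^(m+1) := by
            rw [inv_mul_cancel₀]; positivity
      
    calc ENNReal.ofReal (a/2) ≤ ENNReal.ofReal (((2:ℝ)^(m+1))⁻¹) := ENNReal.ofReal_le_ofReal h1
      _ = ((2:ℝ≥0∞)^(m+1))⁻¹ := by
          rw [ENNReal.ofReal_inv_of_pos (by positivity)]
          congr 1
          rw [ENNReal.ofReal_pow (by norm_num)]
          norm_num
  calc ENNReal.ofReal (a/2) * ∫⁻ τ in Ioo (0:ℝ) 1, ENNReal.ofReal (g τ)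
      ≤ ((2:ℝ≥0∞)^(m+1))⁻¹ * ∫⁻ τ in Ioo (0:ℝ) 1, ENNReal.ofReal (g τ) := by gcongr
    _ ≤ ∫⁻ τ in Ioo 0 (x/2^m), ENNReal.ofReal (g τ) := star_lemma g hgm hhalf m x hx1 hx2
    _ = ∫⁻ τ in Ioo 0 a, ENNReal.ofReal (g τ) := by rw [← hax]

theorem stmt4 (g φ : ℝ → ℝ) (hgm : Measurable g)
    (hg0 : ∀ τ ∈ Ioo (0:ℝ) 1, 0 ≤ g τ)
    (hhalf : ∀ τ ∈ Ioo (0:ℝ) 1, g τ ≤ g (τ / 2))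
    (hφ0 : ∀ τ ∈ Ioo (0:ℝ) 1, 0 ≤ φ τ)
    (hφmono : AntitoneOn φ (Ioo (0:ℝ) 1))
    (hgint : IntegrableOn g (Ioo (0:ℝ) 1))
    (hφint : IntegrableOn φ (Ioo (0:ℝ) 1))
    (hgφint : IntegrableOn (fun τ => g τ * φ τ) (Ioo (0:ℝ) 1)) :
    (1/2) * (∫ τ in Ioo (0:ℝ) 1, g τ) * (∫ τ in Ioo (0:ℝ) 1, φ τ)
      ≤ ∫ τ in Ioo (0:ℝ) 1, g τ * φ τ := by
  set μr := (volume : Measure ℝ).restrict (Ioo (0:ℝ) 1) with hμr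
  set G : ℝ → ℝ≥0∞ := fun τ => ENNReal.ofReal (g τ) with hGdef
  have hG : Measurable G := ENNReal.measurable_ofReal.comp hgm
  set F1 : ℝ≥0∞ := ∫⁻ τ in Ioo (0:ℝ) 1, G τ with hF1
  have hgnn : 0 ≤ᵐ[μr] g := (ae_restrict_iff' measurableSet_Ioo).mpr (ae_of_all _ hg0)
  have hφnn : 0 ≤ᵐ[μr] φ := (ae_restrict_iff' measurableSet_Ioo).mpr (ae_of_all _ hφ0)
  have hgφnn : 0 ≤ᵐ[μr] (fun τ => g τ * φ τ) := by
    apply (ae_restrict_iff' measurableSet_Ioo).mpr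
    apply ae_of_all
    intro τ hτ
    exact mul_nonneg (hg0 τ hτ) (hφ0 τ hτ)
  have hφaem : AEMeasurable φ μr := hφint.1.aemeasurable
  set ν := μr.withDensity G with hν
  have hac : ν ≪ μr := withDensity_absolutelyContinuous _ _
  have hφaem' : AEMeasurable φ ν := hφaem.mono_ac hac
  have hφnn' : 0 ≤ᵐ[ν] φ := hac.ae_le hφnn
  -- F1 finite
  have hF1top : F1 ≠ ⊤ := by
    have := hgint.2
    rw [hasFiniteIntegral_iff_ofReal hgnn] at this
    exact this.ne
  -- superlevel comparison
  have hlevel : ∀ t : ℝ, 2⁻¹ * F1 * μr {a | t < φ a} ≤ ν {a | t < φ a} := by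
    intro t
    set S := {a : ℝ | t < φ a} with hS
    set E := S ∩ Ioo (0:ℝ) 1 with hE
    have hμrS : μr S = volume E := Measure.restrict_apply' measurableSet_Ioo
    rcases eq_empty_or_nonempty E with hemp | hne
    · rw [hμrS, hemp]
      simp
    · obtain ⟨τ₀, hτ₀S, hτ₀I⟩ := hne
      have hbdd : BddAbove E := ⟨1, fun y hy => hy.2.2.le⟩
      set b := sSup E with hb
      have hb1 : b ≤ 1 := csSup_le ⟨τ₀, mem_inter hτ₀S hτ₀I⟩ (fun y hy => hy.2.2.le)
      have hb0 : 0 < b := lt_of_lt_of_le hτ₀I.1 (le_csSup hbdd (mem_inter hτ₀S hτ₀I))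
      have hIoo : Ioo 0 b ⊆ E := by
        intro σ ⟨hσ0, hσb⟩
        obtain ⟨τ, hτE, hστ⟩ := exists_lt_of_lt_csSup ⟨τ₀, mem_inter hτ₀S hτ₀I⟩ hσb
        have hσI : σ ∈ Ioo (0:ℝ) 1 := ⟨hσ0, lt_trans hστ hτE.2.2⟩
        refine ⟨?_, hσI⟩
        have := hφmono hσI hτE.2 hστ.le
        exact lt_of_lt_of_le hτE.1 this
      have hEb : E ⊆ Ioc 0 b := fun y hy => ⟨hy.2.1, le_csSup hbdd hy⟩
      have hμrSb : μr S ≤ ENNReal.ofReal b := by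
        rw [hμrS]
        calc volume E ≤ volume (Ioc (0:ℝ) b) := measure_mono hEb
          _ = ENNReal.ofReal b := by rw [Real.volume_Ioc]; norm_num
      have hνS : ν (Ioo 0 b) ≤ ν S := measure_mono (subset_trans hIoo inter_subset_left)
      have hνIoo : ν (Ioo 0 b) = ∫⁻ τ in Ioo 0 b, G τ := by
        rw [hν, withDensity_apply _ measurableSet_Ioo, hμr,
          Measure.restrict_restrict measurableSet_Ioo,
          inter_eq_left.mpr (Ioo_subset_Ioo_right hb1)]
      calc 2⁻¹ * F1 * μr S ≤ 2⁻¹ * F1 * ENNReal.ofReal b := by gcongr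
        _ = ENNReal.ofReal (b/2) * F1 := by
            rw [ENNReal.ofReal_div_of_pos (by norm_num), show ENNReal.ofReal 2 = 2 by norm_num,
              ENNReal.div_eq_inv_mul]
            ring
        _ ≤ ∫⁻ τ in Ioo 0 b, G τ := star_all g hgm hhalf b hb0 hb1
        _ = ν (Ioo 0 b) := hνIoo.symm
        _ ≤ ν S := hνS
  -- layer cake
  have lc1 : ∫⁻ τ, ENNReal.ofReal (φ τ) ∂μr = ∫⁻ t in Ioi (0:ℝ), μr {a | t < φ a} :=
    lintegral_eq_lintegral_meas_lt μr hφnn hφaem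
  have lc2 : ∫⁻ τ, ENNReal.ofReal (φ τ) ∂ν = ∫⁻ t in Ioi (0:ℝ), ν {a | t < φ a} :=
    lintegral_eq_lintegral_meas_lt ν hφnn' hφaem'
  have hwd : ∫⁻ τ, ENNReal.ofReal (φ τ) ∂ν = ∫⁻ τ, G τ * ENNReal.ofReal (φ τ) ∂μr := by
    rw [hν, lintegral_withDensity_eq_lintegral_mul_non_measurable _ hG]
    · rfl
    · apply ae_of_all
      intro x
      exact ENNReal.ofReal_lt_top
  have main : 2⁻¹ * F1 * ∫⁻ τ, ENNReal.ofReal (φ τ) ∂μr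
      ≤ ∫⁻ τ, G τ * ENNReal.ofReal (φ τ) ∂μr := by
    rw [← hwd, lc1, lc2, ← lintegral_const_mul' _ _
      (by exact ENNReal.mul_ne_top (by norm_num) hF1top)]
    exact lintegral_mono (fun t => hlevel t)
  -- convert to real integrals
  have cg : ENNReal.ofReal (∫ τ in Ioo (0:ℝ) 1, g τ) = F1 :=
    ofReal_integral_eq_lintegral_ofReal hgint hgnn
  have cφ : ENNReal.ofReal (∫ τ in Ioo (0:ℝ) 1, φ τ) = ∫⁻ τ, ENNReal.ofReal (φ τ) ∂μr :=
    ofReal_integral_eq_lintegral_ofReal hφint hφnn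
  have cgφ : ENNReal.ofReal (∫ τ in Ioo (0:ℝ) 1, g τ * φ τ)
      = ∫⁻ τ, G τ * ENNReal.ofReal (φ τ) ∂μr := by
    rw [ofReal_integral_eq_lintegral_ofReal hgφint hgφnn]
    apply lintegral_congr_ae
    apply (ae_restrict_iff' measurableSet_Ioo).mpr
    apply ae_of_all
    intro τ hτ
    exact ENNReal.ofReal_mul (hg0 τ hτ)
  have hgI0 : 0 ≤ ∫ τ in Ioo (0:ℝ) 1, g τ := setIntegral_nonneg measurableSet_Ioo hg0
  have hφI0 : 0 ≤ ∫ τ in Ioo (0:ℝ) 1, φ τ := setIntegral_nonneg measurableSet_Ioo hφ0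
  have hgφI0 : 0 ≤ ∫ τ in Ioo (0:ℝ) 1, g τ * φ τ :=
    setIntegral_nonneg measurableSet_Ioo (fun τ hτ => mul_nonneg (hg0 τ hτ) (hφ0 τ hτ))
  rw [← ENNReal.ofReal_le_ofReal_iff hgφI0]
  calc ENNReal.ofReal ((1/2) * (∫ τ in Ioo (0:ℝ) 1, g τ) * (∫ τ in Ioo (0:ℝ) 1, φ τ))
      = ENNReal.ofReal ((1/2) * (∫ τ in Ioo (0:ℝ) 1, g τ))
        * ENNReal.ofReal (∫ τ in Ioo (0:ℝ) 1, φ τ) := by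
        rw [ENNReal.ofReal_mul (by positivity)]
    _ = ENNReal.ofReal (1/2) * ENNReal.ofReal (∫ τ in Ioo (0:ℝ) 1, g τ)
        * ENNReal.ofReal (∫ τ in Ioo (0:ℝ) 1, φ τ) := by
        rw [ENNReal.ofReal_mul (by norm_num)]
    _ = 2⁻¹ * F1 * ∫⁻ τ, ENNReal.ofReal (φ τ) ∂μr := by
        rw [cg, cφ]
        congr 1
        congr 1
        rw [show (1:ℝ)/2 = (2:ℝ)⁻¹ by norm_num, ENNReal.ofReal_inv_of_pos (by norm_num)]
        norm_num
    _ ≤ ∫⁻ τ, G τ * ENNReal.ofReal (φ τ) ∂μr := main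
    _ = ENNReal.ofReal (∫ τ in Ioo (0:ℝ) 1, g τ * φ τ) := cgφ.symm
end
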